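/- Every eigenvalue of the block Laplacian L_blk belongs to the set {0, (n_a+n_b)β, n_a α + n_b β, n_b α + n_a β}. -/

import Mathlib

open Matrix

/-- Block adjacency matrix: `α` on the two diagonal blocks, `β` off-diagonal. -/
noncomputable def Ablk (na nb : ℕ) (α β : ℝ) : Matrix (Fin (na+nb)) (Fin (na+nb)) ℝ :=
  Matrix.of fun i j => if ((i : ℕ) < na ↔ (j : ℕ) < na) then α else β

/-- Block Laplacian `D - A` with `D = diag(A·1)`. -/
noncomputable def Lblk (na nb : ℕ) (α β : ℝ) : Matrix (Fin (na+nb)) (Fin (na+nb)) ℝ :=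
  Matrix.diagonal (Ablk na nb α β *ᵥ fun _ => (1 : ℝ)) - Ablk na nb α β

theorem stmt5 (na nb : ℕ) (hna : 1 ≤ na) (hnb : 1 ≤ nb) (α β : ℝ)
    (hβ0 : 0 ≤ β) (hβα : β ≤ α) (lam : ℝ)
    (h : ∃ v : Fin (na+nb) → ℝ, v ≠ 0 ∧ Lblk na nb α β *ᵥ v = lam • v) :
    lam ∈ ({0, ((na : ℝ) + nb) * β, (na : ℝ) * α + (nb : ℝ) * β,
      (nb : ℝ) * α + (na : ℝ) * β} : Set ℝ) := by
  obtain ⟨v, hv0, hv⟩ := h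
  -- computation of A *ᵥ w
  have hA : ∀ (w : Fin (na+nb) → ℝ) (i : Fin (na+nb)), (Ablk na nb α β *ᵥ w) i =
      (if (i:ℕ) < na then α else β) * (∑ j : Fin na, w (Fin.castAdd nb j)) +
      (if (i:ℕ) < na then β else α) * (∑ j : Fin nb, w (Fin.natAdd na j)) := by
    intro w i
    simp only [Ablk, mulVec, dotProduct, of_apply]
    rw [Fin.sum_univ_add, Finset.mul_sum, Finset.mul_sum]
    congr 1
    · refine Finset.sum_congr rfl fun j _ => ?_
      have hj : ((Fin.castAdd nb j : Fin (na+nb)) : ℕ) < na := by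
        simpa using j.isLt
      by_cases hi : (i:ℕ) < na <;> simp [hi, hj]
    · refine Finset.sum_congr rfl fun j _ => ?_
      have hj : ¬ ((Fin.natAdd na j : Fin (na+nb)) : ℕ) < na := by
        simp [Fin.natAdd]
      by_cases hi : (i:ℕ) < na <;> simp [hi, hj]
  set Sa := ∑ j : Fin na, v (Fin.castAdd nb j) with hSa
  set Sb := ∑ j : Fin nb, v (Fin.natAdd na j) with hSb
  have hL : ∀ i : Fin (na+nb), (Lblk na nb α β *ᵥ v) i =
      ((if (i:ℕ) < na then α else β) * na + (if (i:ℕ) < na then β else α) * nb) * v i -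
      ((if (i:ℕ) < na then α else β) * Sa + (if (i:ℕ) < na then β else α) * Sb) := by
    intro i
    have h1 : (Lblk na nb α β *ᵥ v) i =
        (Ablk na nb α β *ᵥ fun _ => (1:ℝ)) i * v i - (Ablk na nb α β *ᵥ v) i := by
      simp [Lblk, sub_mulVec, mulVec_diagonal]
    rw [h1, hA, hA]
    simp
    rw [hSa, hSb]
  have ha : ∀ i : Fin na,
      ((na:ℝ)*α + (nb:ℝ)*β - lam) * v (Fin.castAdd nb i) = α*Sa + β*Sb := by
    intro i
    have := congrFun hv (Fin.castAdd nb i)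
    rw [hL] at this
    have hi : ((Fin.castAdd nb i : Fin (na+nb)) : ℕ) < na := by simpa using i.isLt
    simp only [hi, if_true, Pi.smul_apply, smul_eq_mul] at this
    linarith [this]
  have hb : ∀ i : Fin nb,
      ((nb:ℝ)*α + (na:ℝ)*β - lam) * v (Fin.natAdd na i) = β*Sa + α*Sb := by
    intro i
    have := congrFun hv (Fin.natAdd na i)
    rw [hL] at this
    have hi : ¬ ((Fin.natAdd na i : Fin (na+nb)) : ℕ) < na := by simp [Fin.natAdd]
    simp only [hi, if_false, Pi.smul_apply, smul_eq_mul] at this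
    linarith [this]
  by_cases hda : lam = (na:ℝ)*α + (nb:ℝ)*β
  · simp [Set.mem_insert_iff, hda]
  by_cases hdb : lam = (nb:ℝ)*α + (na:ℝ)*β
  · simp [Set.mem_insert_iff, hdb]
  -- sum the equations over each block
  have hSaeq : ((na:ℝ)*α + (nb:ℝ)*β - lam) * Sa = (na:ℝ) * (α*Sa + β*Sb) := by
    calc ((na:ℝ)*α + (nb:ℝ)*β - lam) * Sa
        = ∑ i : Fin na, ((na:ℝ)*α + (nb:ℝ)*β - lam) * v (Fin.castAdd nb i) := by
          rw [hSa, Finset.mul_sum]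
      _ = ∑ _i : Fin na, (α*Sa + β*Sb) := Finset.sum_congr rfl fun i _ => ha i
      _ = (na:ℝ) * (α*Sa + β*Sb) := by
          simp [Finset.sum_const, nsmul_eq_mul, mul_add]
  have hSbeq : ((nb:ℝ)*α + (na:ℝ)*β - lam) * Sb = (nb:ℝ) * (β*Sa + α*Sb) := by
    calc ((nb:ℝ)*α + (na:ℝ)*β - lam) * Sb
        = ∑ i : Fin nb, ((nb:ℝ)*α + (na:ℝ)*β - lam) * v (Fin.natAdd na i) := by
          rw [hSb, Finset.mul_sum]
      _ = ∑ _i : Fin nb, (β*Sa + α*Sb) := Finset.sum_congr rfl fun i _ => hb i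
      _ = (nb:ℝ) * (β*Sa + α*Sb) := by
          simp [Finset.sum_const, nsmul_eq_mul, mul_add]
  have P1 : ((nb:ℝ)*β - lam) * Sa = (na:ℝ)*β*Sb := by linear_combination hSaeq
  have P2 : ((na:ℝ)*β - lam) * Sb = (nb:ℝ)*β*Sa := by linear_combination hSbeq
  have hda' : (na:ℝ)*α + (nb:ℝ)*β - lam ≠ 0 := fun hc => hda (by linarith)
  have hdb' : (nb:ℝ)*α + (na:ℝ)*β - lam ≠ 0 := fun hc => hdb (by linarith)
  have hS : Sa ≠ 0 ∨ Sb ≠ 0 := by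
    by_contra hc
    push_neg at hc
    obtain ⟨h3, h4⟩ := hc
    apply hv0
    funext i
    refine Fin.addCases (fun j => ?_) (fun j => ?_) i
    · have := ha j
      rw [h3, h4] at this
      simp only [mul_zero, add_zero] at this
      rcases mul_eq_zero.mp this with hc' | hc'
      · exact absurd hc' hda'
      · simpa using hc'
    · have := hb j
      rw [h3, h4] at this
      simp only [mul_zero, add_zero, zero_add] at this
      rcases mul_eq_zero.mp this with hc' | hc'
      · exact absurd hc' hdb'
      · simpa using hc'
  have key : lam * (lam - ((na:ℝ) + nb) * β) = 0 := by
    rcases hS with hSa0 | hSb0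
    · have h5 : (((na:ℝ)*β - lam) * ((nb:ℝ)*β - lam)) * Sa = ((na:ℝ)*(nb:ℝ)*β^2) * Sa := by
        linear_combination ((na:ℝ)*β - lam) * P1 + (na:ℝ)*β * P2
      have := mul_right_cancel₀ hSa0 h5
      linear_combination this
    · have h5 : (((nb:ℝ)*β - lam) * ((na:ℝ)*β - lam)) * Sb = ((na:ℝ)*(nb:ℝ)*β^2) * Sb := by
        linear_combination ((nb:ℝ)*β - lam) * P2 + (nb:ℝ)*β * P1
      have := mul_right_cancel₀ hSb0 h5
      linear_combination this
  rcases mul_eq_zero.mp key with h0 | h0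
  · simp [Set.mem_insert_iff, h0]
  · have : lam = ((na:ℝ) + nb) * β := by linarith
    simp [Set.mem_insert_iff, this]
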